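/- If G is a graph with a bramble of order at least h, where h ≥ 3, then G contains a cycle of length at least h, and in particular G contains the cycle C_h on h vertices as a minor. -/

import Mathlib

open SimpleGraph

variable {V : Type*}

/-- A bramble: a family of vertex sets, each inducing a connected subgraph,
pairwise intersecting or joined by an edge. -/
def IsBramble (G : SimpleGraph V) (B : Set (Set V)) : Prop :=
  (∀ S ∈ B, S.Nonempty ∧ (G.induce S).Connected) ∧
  (∀ S ∈ B, ∀ T ∈ B, (S ∩ T).Nonempty ∨ ∃ u ∈ S, ∃ v ∈ T, G.Adj u v)

/-- `X` hits every element of the family `B`. -/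
def HitsAll (B : Set (Set V)) (X : Set V) : Prop := ∀ S ∈ B, (S ∩ X).Nonempty

/-- The order of a bramble: minimum size of a hitting set. -/
noncomputable def brambleOrder (B : Set (Set V)) : ℕ :=
  sInf {n | ∃ X : Set V, X.Finite ∧ X.ncard = n ∧ HitsAll B X}

/-- The subfamily of elements of `B` meeting `X`. -/
def sub (B : Set (Set V)) (X : Set V) : Set (Set V) := {S ∈ B | (S ∩ X).Nonempty}

/-- `H` is a minor of `G`, via branch sets. -/
def IsMinor {W : Type*} (H : SimpleGraph W) (G : SimpleGraph V) : Prop :=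
  ∃ φ : W → Set V, (∀ w, (φ w).Nonempty ∧ (G.induce (φ w)).Connected) ∧
    (∀ w w', w ≠ w' → Disjoint (φ w) (φ w')) ∧
    (∀ w w', H.Adj w w' → ∃ u ∈ φ w, ∃ v ∈ φ w', G.Adj u v)

namespace BrambleAux
open SimpleGraph.Walk


open SimpleGraph.Walk

lemma append_isPath {G : SimpleGraph V} {u v w : V} {p : G.Walk u v} {q : G.Walk v w}
    (hp : p.IsPath) (hq : q.IsPath)
    (hd : ∀ x, x ∈ p.support → x ∈ q.support → x = v) : (p.append q).IsPath := by
  rw [Walk.isPath_def, Walk.support_append]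
  refine List.Nodup.append hp.support_nodup hq.support_nodup.tail ?_
  intro x hxp hxq
  have hxq' : x ∈ q.support := List.mem_of_mem_tail hxq
  have hx : x = v := hd x hxp hxq'
  subst hx
  have hnd := hq.support_nodup
  rw [q.support_eq_cons] at hnd
  exact (List.nodup_cons.mp hnd).1 hxq

lemma exists_walk_in {G : SimpleGraph V} {T : Set V} (hT : (G.induce T).Connected)
    {a b : V} (ha : a ∈ T) (hb : b ∈ T) :
    ∃ q : G.Walk a b, ∀ x ∈ q.support, x ∈ T := by
  obtain ⟨W⟩ := hT.preconnected ⟨a, ha⟩ ⟨b, hb⟩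
  refine ⟨W.map (SimpleGraph.Embedding.induce T).toHom, ?_⟩
  intro x hx
  replace hx : x ∈ List.map (Embedding.induce (G := G) T).toHom W.support := by
    rw [← Walk.support_map]; exact hx
  rw [List.mem_map] at hx
  obtain ⟨y, _, rfl⟩ := hx
  exact y.2

lemma support_eq_map {G : SimpleGraph V} {u v : V} (p : G.Walk u v) :
    p.support = (List.range (p.length + 1)).map p.getVert := by
  induction p with
  | nil => simp [Walk.getVert]
  | cons h q ih =>
    have hc : (Walk.cons h q).getVert ∘ Nat.succ = q.getVert := rfl
    rw [Walk.support_cons, Walk.length_cons, List.range_succ_eq_map, List.map_cons,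
      List.map_map, hc, ← ih]
    rfl

lemma cycle_getVert_inj {G : SimpleGraph V} {x : V} {C : G.Walk x x} (hC : C.IsCycle) :
    ∀ i < C.length, ∀ j < C.length, C.getVert i = C.getVert j → i = j := by
  have h3 := hC.three_le_length
  have h1 : C.support.tail = (List.range C.length).map (fun j => C.getVert (j + 1)) := by
    rw [support_eq_map, List.range_succ_eq_map, List.map_cons, List.tail_cons, List.map_map]
    rfl
  have hnd := hC.support_nodup
  rw [h1] at hnd
  have hinj := List.inj_on_of_nodup_map hnd
  have key : ∀ i, 0 < i → i ≤ C.length → ∀ j, 0 < j → j ≤ C.length →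
      C.getVert i = C.getVert j → i = j := by
    intro i hi0 hil j hj0 hjl heq
    have h1' : i - 1 ∈ List.range C.length := List.mem_range.mpr (by omega)
    have h2' : j - 1 ∈ List.range C.length := List.mem_range.mpr (by omega)
    have := hinj h1' h2' (by rw [Nat.sub_add_cancel hi0, Nat.sub_add_cancel hj0]; exact heq)
    omega
  intro i hi j hj heq
  rcases Nat.eq_zero_or_pos i with rfl | hi0
  · rcases Nat.eq_zero_or_pos j with rfl | hj0
    · rfl
    · exfalso
      have h0 : C.getVert C.length = C.getVert j :=
        (Walk.getVert_length C).trans ((C.getVert_zero).symm.trans heq)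
      have := key C.length (by omega) le_rfl j hj0 (by omega) h0
      omega
  · rcases Nat.eq_zero_or_pos j with rfl | hj0
    · exfalso
      have h0 : C.getVert i = C.getVert C.length :=
        heq.trans ((C.getVert_zero).trans (Walk.getVert_length C).symm)
      have := key i hi0 (by omega) C.length (by omega) le_rfl h0
      omega
    · exact key i hi0 (by omega) j hj0 (by omega) heq

lemma induce_seg_connected {G : SimpleGraph V} (f : ℕ → V) (a b : ℕ) (hab : a ≤ b)
    (hadj : ∀ j, a ≤ j → j < b → G.Adj (f j) (f (j + 1))) :
    (G.induce {w | ∃ j, a ≤ j ∧ j ≤ b ∧ w = f j}).Connected := by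
  set S : Set V := {w | ∃ j, a ≤ j ∧ j ≤ b ∧ w = f j} with hS
  have hmem : ∀ j, a ≤ j → j ≤ b → f j ∈ S := fun j h1 h2 => ⟨j, h1, h2, rfl⟩
  have key : ∀ j (h1 : a ≤ j) (h2 : j ≤ b),
      (G.induce S).Reachable ⟨f a, hmem a le_rfl hab⟩ ⟨f j, hmem j h1 h2⟩ := by
    intro j h1
    induction j, h1 using Nat.le_induction with
    | base => intro _; rfl
    | succ j hj ih =>
      intro h2
      have hr := ih (by omega)
      refine hr.trans (Adj.reachable ?_)
      show G.Adj (f j) (f (j + 1))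
      exact hadj j hj (by omega)
  rw [connected_iff]
  refine ⟨?_, ⟨⟨f a, hmem a le_rfl hab⟩⟩⟩
  rintro ⟨w, hw⟩ ⟨w', hw'⟩
  obtain ⟨j, h1, h2, rfl⟩ := hw
  obtain ⟨j', h1', h2', rfl⟩ := hw'
  exact (key j h1 h2).symm.trans (key j' h1' h2')

lemma not_edge_of_isPath {G : SimpleGraph V} {u v : V} (p : G.Walk u v) (hp : p.IsPath)
    (hl : 2 ≤ p.length) : s(u, v) ∉ p.edges := by
  cases p with
  | nil => simp at hl
  | @cons _ w _ hadj q =>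
    intro hmem
    rw [Walk.edges_cons, List.mem_cons] at hmem
    rcases hmem with heq | hmem
    · have hvw : v = w := (Sym2.congr_right.mp heq)
      subst hvw
      have hq : q.IsPath := hp.of_cons
      have : q = Walk.nil := by
        have := SimpleGraph.Path.loop_eq ⟨q, hq⟩
        exact congrArg Subtype.val this
      rw [Walk.length_cons, this] at hl
      simp at hl
    · have : u ∈ q.support := Walk.fst_mem_support_of_mem_edges q hmem
      rw [Walk.cons_isPath_iff] at hp
      exact hp.2 this



def metSets (G : SimpleGraph V) (B : Set (Set V)) {u v : V} (p : G.Walk u v) :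
    Set (Set V) := {S | S ∈ B ∧ ∃ z ∈ S, z ∈ p.support}

lemma exists_good_path [Fintype V] {G : SimpleGraph V} {B : Set (Set V)}
    (hB : IsBramble G B) (hne : B.Nonempty) :
    ∃ (u v : V) (p : G.Walk u v), p.IsPath ∧ (∀ S ∈ B, ∃ z ∈ S, z ∈ p.support) ∧
      (∃ T ∈ B, u ∈ T ∧ ∀ z ∈ T, z ∈ p.support → z = u) ∧
      (∃ T ∈ B, v ∈ T ∧ ∀ z ∈ T, z ∈ p.support → z = v) := by
  classical
  have hfin : ∀ (A : Set (Set V)), A.Finite := fun A => Set.toFinite A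
  obtain ⟨S0, hS0⟩ := hne
  obtain ⟨x0, hx0⟩ := (hB.1 S0 hS0).1
  set NS : Set ℕ := {n | ∃ (u v : V) (p : G.Walk u v), p.IsPath ∧ (metSets G B p).ncard = n}
    with hNS
  have hNSne : NS.Nonempty := ⟨_, x0, x0, Walk.nil, Walk.IsPath.nil, rfl⟩
  have hNSbdd : BddAbove NS := by
    refine ⟨B.ncard, ?_⟩
    rintro n ⟨u, v, p, hp, rfl⟩
    exact Set.ncard_le_ncard (fun S hS => hS.1) (hfin B)
  set N := sSup NS with hN
  have hNmax : ∀ {u v : V} (q : G.Walk u v), q.IsPath → (metSets G B q).ncard ≤ N :=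
    fun q hq => le_csSup hNSbdd ⟨_, _, q, hq, rfl⟩
  obtain ⟨u0, v0, p0, hp0, hcnt0⟩ := Nat.sSup_mem hNSne hNSbdd
  set LS : Set ℕ := {n | ∃ (u v : V) (p : G.Walk u v),
    p.IsPath ∧ (metSets G B p).ncard = N ∧ p.length = n} with hLS
  have hLSne : LS.Nonempty := ⟨_, _, _, p0, hp0, hcnt0, rfl⟩
  obtain ⟨u, v, p, hp, hcnt, hlen⟩ := Nat.sInf_mem hLSne
  have hLmin : ∀ {u' v' : V} (q : G.Walk u' v'), q.IsPath → (metSets G B q).ncard = N →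
      p.length ≤ q.length := by
    intro u' v' q hq hqc
    rw [hlen]
    exact Nat.sInf_le ⟨_, _, q, hq, hqc, rfl⟩
  have hN1 : 1 ≤ N := by
    have h1 : S0 ∈ metSets G B (Walk.nil : G.Walk x0 x0) := ⟨hS0, x0, hx0, by simp⟩
    have h2 : 0 < (metSets G B (Walk.nil : G.Walk x0 x0)).ncard :=
      (Set.ncard_pos (hfin _)).mpr ⟨S0, h1⟩
    exact h2.trans_le (hNmax _ Walk.IsPath.nil)
  -- endpoint lemma at the start vertex
  have start_lemma : ∀ (u' v' : V) (q : G.Walk u' v'), q.IsPath →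
      (metSets G B q).ncard = N → q.length = p.length →
      ∃ T ∈ B, u' ∈ T ∧ ∀ z ∈ T, z ∈ q.support → z = u' := by
    intro u' v' q hq hqc hql
    cases q with
    | nil =>
      have hmetne : (metSets G B (Walk.nil : G.Walk u' u')).Nonempty := by
        rw [← Set.ncard_pos (hfin _), hqc]; omega
      obtain ⟨T, hTB, z, hzT, hzs⟩ := hmetne
      have hz : z = u' := by simpa using hzs
      subst hz
      exact ⟨T, hTB, hzT, fun z' _ hz's => by simpa using hz's⟩
    | @cons _ w _ hadj q' =>
      by_cases hall : ∀ T ∈ metSets G B (Walk.cons hadj q'), ∃ z ∈ T, z ∈ q'.support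
      · exfalso
        have heq : metSets G B q' = metSets G B (Walk.cons hadj q') := by
          ext S
          constructor
          · rintro ⟨hSB, z, hzS, hzs⟩
            exact ⟨hSB, z, hzS, by rw [Walk.support_cons]; exact List.mem_cons_of_mem _ hzs⟩
          · rintro hS
            obtain ⟨z, hzS, hzs⟩ := hall S hS
            exact ⟨hS.1, z, hzS, hzs⟩
        have hq' : q'.IsPath := hq.of_cons
        have := hLmin q' hq' (by rw [heq, hqc])
        rw [← hql, Walk.length_cons] at this
        omega
      · push_neg at hall
        obtain ⟨T, hT, hTnot⟩ := hall
        obtain ⟨hTB, z, hzT, hzs⟩ := hT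
        rw [Walk.support_cons, List.mem_cons] at hzs
        have hz : z = u' := by
          rcases hzs with h | h
          · exact h
          · exact absurd h (hTnot z hzT)
        subst hz
        refine ⟨T, hTB, hzT, fun z' hz'T hz's => ?_⟩
        rw [Walk.support_cons, List.mem_cons] at hz's
        rcases hz's with h | h
        · exact h
        · exact absurd h (hTnot z' hz'T)
  -- the set met only at the end vertex
  have hmetrev : metSets G B p.reverse = metSets G B p := by
    ext S
    constructor <;> rintro ⟨hSB, z, hzS, hzs⟩
    · exact ⟨hSB, z, hzS, by rwa [Walk.support_reverse, List.mem_reverse] at hzs⟩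
    · exact ⟨hSB, z, hzS, by rwa [Walk.support_reverse, List.mem_reverse]⟩
  obtain ⟨Tv, hTvB, hvTv, hTvonly'⟩ := start_lemma v u p.reverse hp.reverse
    (by rw [hmetrev]; exact hcnt) (by rw [Walk.length_reverse])
  have hTvonly : ∀ z ∈ Tv, z ∈ p.support → z = v := fun z hz hzs =>
    hTvonly' z hz (by rwa [Walk.support_reverse, List.mem_reverse])
  -- claim: every set of B is met by p
  have hBsub : ∀ S ∈ B, S ∈ metSets G B p := by
    intro S hSB
    by_contra hSnot
    have hSdisj : ∀ z ∈ S, z ∉ p.support := fun z hz hzs => hSnot ⟨hSB, z, hz, hzs⟩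
    -- get a path from v to a vertex of S staying in Tv ∪ {endpoint}
    have hstep : ∃ (w : V) (q : G.Walk v w), w ∈ S ∧ q.IsPath ∧
        (∀ z ∈ q.support, z ∈ Tv ∨ z = w) := by
      rcases hB.2 S hSB Tv hTvB with ⟨w, hwS, hwTv⟩ | ⟨s, hsS, t, htTv, hadj⟩
      · obtain ⟨q0, hq0⟩ := exists_walk_in (hB.1 Tv hTvB).2 hvTv hwTv
        exact ⟨w, q0.bypass, hwS, q0.bypass_isPath,
          fun z hz => Or.inl (hq0 z (q0.support_bypass_subset hz))⟩
      · obtain ⟨q0, hq0⟩ := exists_walk_in (hB.1 Tv hTvB).2 hvTv htTv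
        refine ⟨s, (q0.append (Walk.cons hadj.symm Walk.nil)).bypass, hsS,
          Walk.bypass_isPath _, fun z hz => ?_⟩
        have hz' := Walk.support_bypass_subset _ hz
        rw [Walk.mem_support_append_iff] at hz'
        rcases hz' with h | h
        · exact Or.inl (hq0 z h)
        · simp only [Walk.support_cons, Walk.support_nil, List.mem_cons,
            List.mem_singleton, List.not_mem_nil, or_false] at h
          rcases h with rfl | rfl
          · exact Or.inl htTv
          · exact Or.inr rfl
    obtain ⟨w, q, hwS, hqP, hqsup⟩ := hstep
    have hnew : (p.append q).IsPath := by
      refine append_isPath hp hqP ?_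
      intro z hzp hzq
      rcases hqsup z hzq with h | h
      · exact hTvonly z h hzp
      · exact absurd hzp (h ▸ hSdisj w hwS)
    have hsub : insert S (metSets G B p) ⊆ metSets G B (p.append q) := by
      rintro S' hS'
      rcases Set.mem_insert_iff.mp hS' with rfl | hS'
      · exact ⟨hSB, w, hwS, by
          rw [Walk.mem_support_append_iff]; exact Or.inr q.end_mem_support⟩
      · obtain ⟨hS'B, z, hzS', hzs⟩ := hS'
        exact ⟨hS'B, z, hzS', by rw [Walk.mem_support_append_iff]; exact Or.inl hzs⟩
    have h1 : N + 1 ≤ (metSets G B (p.append q)).ncard := by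
      calc N + 1 = (metSets G B p).ncard + 1 := by rw [hcnt]
        _ = (insert S (metSets G B p)).ncard :=
          (Set.ncard_insert_of_notMem hSnot (hfin _)).symm
        _ ≤ _ := Set.ncard_le_ncard hsub (hfin _)
    have h2 := hNmax _ hnew
    omega
  obtain ⟨Tu, hTuB, huTu, hTuonly⟩ := start_lemma u v p hp hcnt rfl
  exact ⟨u, v, p, hp, fun S hS => (hBsub S hS).2, ⟨Tu, hTuB, huTu, hTuonly⟩,
    ⟨Tv, hTvB, hvTv, hTvonly⟩⟩


lemma cycle_to_minor {G : SimpleGraph V} {h : ℕ} (hh : 3 ≤ h) {x : V} (C : G.Walk x x)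
    (hC : C.IsCycle) (hlen : h ≤ C.length) : IsMinor (SimpleGraph.cycleGraph h) G := by
  obtain ⟨m, rfl⟩ : ∃ m, h = m + 2 := ⟨h - 2, by omega⟩
  set n := C.length with hn
  have hn2 : m + 2 ≤ n := hlen
  have hinj := cycle_getVert_inj hC
  -- upper index of the segment of branch set i
  set hi : Fin (m + 2) → ℕ := fun i => if (i : ℕ) = m + 1 then n - 1 else (i : ℕ) with hhi
  have hlo_le : ∀ i : Fin (m + 2), (i : ℕ) ≤ hi i := by
    intro i
    by_cases hc : (i : ℕ) = m + 1 <;> simp [hhi, hc]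
    omega
  have hhi_le : ∀ i : Fin (m + 2), hi i ≤ n - 1 := by
    intro i
    by_cases hc : (i : ℕ) = m + 1 <;> simp [hhi, hc]
    have := i.isLt; omega
  set φ : Fin (m + 2) → Set V :=
    fun i => {w | ∃ j, (i : ℕ) ≤ j ∧ j ≤ hi i ∧ w = C.getVert j} with hφ
  refine ⟨φ, ?_, ?_, ?_⟩
  · intro i
    constructor
    · exact ⟨C.getVert i, i, le_rfl, hlo_le i, rfl⟩
    · refine induce_seg_connected C.getVert (i : ℕ) (hi i) (hlo_le i) ?_
      intro j _ hj
      exact C.adj_getVert_succ (by have := hhi_le i; omega)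
  · intro i i' hne
    rw [Set.disjoint_left]
    rintro w ⟨j, hj1, hj2, rfl⟩ ⟨j', hj'1, hj'2, hw⟩
    have hjn : j < n := by have := hhi_le i; omega
    have hj'n : j' < n := by have := hhi_le i'; omega
    have hjj' : j = j' := hinj j hjn j' hj'n hw
    subst hjj'
    -- derive i = i'
    apply hne
    have hi1 := i.isLt
    have hi2 := i'.isLt
    refine Fin.ext ?_
    by_cases hc : (i : ℕ) = m + 1 <;> by_cases hc' : (i' : ℕ) = m + 1
    · omega
    · have e : hi i' = (i' : ℕ) := if_neg hc'
      rw [e] at hj'2; omega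
    · have e : hi i = (i : ℕ) := if_neg hc
      rw [e] at hj2; omega
    · have e : hi i = (i : ℕ) := if_neg hc
      have e' : hi i' = (i' : ℕ) := if_neg hc'
      rw [e] at hj2; rw [e'] at hj'2; omega
  · -- adjacency
    have key : ∀ i : Fin (m + 2), ∃ a ∈ φ i, ∃ b ∈ φ (i + 1), G.Adj a b := by
      intro i
      by_cases hc : (i : ℕ) = m + 1
      · -- wrap around: i is the last vertex, i + 1 = 0
        have hlast : i = Fin.last (m + 1) := Fin.ext hc
        have hval : ((i + 1 : Fin (m + 2)) : ℕ) = 0 := by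
          rw [Fin.val_add_one, if_pos hlast]
        refine ⟨C.getVert (n - 1), ⟨n - 1, by omega, ?_, rfl⟩,
          C.getVert 0, ⟨0, hval.le, Nat.zero_le _, rfl⟩, ?_⟩
        · have e : hi i = n - 1 := if_pos hc
          omega
        · have hadj := C.adj_getVert_succ (i := n - 1) (by omega)
          have hx : C.getVert n = C.getVert 0 := by
            rw [C.getVert_zero]; exact C.getVert_length
          rwa [show n - 1 + 1 = n by omega, hx] at hadj
      · have hval : ((i + 1 : Fin (m + 2)) : ℕ) = (i : ℕ) + 1 := by
          rw [Fin.val_add_one, if_neg (fun hl => hc (by rw [hl]; rfl))]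
        refine ⟨C.getVert i, ⟨(i : ℕ), le_rfl, ?_, rfl⟩,
          C.getVert ((i : ℕ) + 1), ⟨(i : ℕ) + 1, hval.le, ?_, rfl⟩, ?_⟩
        · have e : hi i = (i : ℕ) := if_neg hc
          omega
        · have e : hi (i + 1) = if (i : ℕ) + 1 = m + 1 then n - 1 else (i : ℕ) + 1 := by
            simp only [hhi]; rw [hval]
          rw [e]
          split_ifs with hc'
          · omega
          · exact le_rfl
        · exact C.adj_getVert_succ (by have := i.isLt; omega)
    intro i i' hadj
    rw [SimpleGraph.cycleGraph_adj] at hadj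
    rcases hadj with hd | hd
    · -- i - i' = 1, so i = i' + 1
      have : i = i' + 1 := (sub_eq_iff_eq_add.mp hd).trans (add_comm 1 i')
      subst this
      obtain ⟨a, ha, b, hb, hab⟩ := key i'
      exact ⟨b, hb, a, ha, hab.symm⟩
    · have : i' = i + 1 := (sub_eq_iff_eq_add.mp hd).trans (add_comm 1 i)
      subst this
      exact key i


end BrambleAux

/-- A bramble of order at least `h ≥ 3` yields a cycle of length at least `h`,
and in particular a `C_h` minor. -/
theorem stmt_10 [Fintype V] (G : SimpleGraph V) (B : Set (Set V)) (h : ℕ) (hh : 3 ≤ h)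
    (hB : IsBramble G B) (hord : h ≤ brambleOrder B) :
    (∃ (v : V) (w : G.Walk v v), w.IsCycle ∧ h ≤ w.length) ∧
    IsMinor (SimpleGraph.cycleGraph h) G := by
  classical
  have hkey : ∀ X : Set V, X.Finite → HitsAll B X → h ≤ X.ncard := by
    intro X hf hH
    exact hord.trans (Nat.sInf_le ⟨X, hf, rfl, hH⟩)
  have hBne : B.Nonempty := by
    rcases Set.eq_empty_or_nonempty B with rfl | hne
    · exfalso
      have := hkey ∅ Set.finite_empty (fun S hS => absurd hS (Set.notMem_empty S))
      rw [Set.ncard_empty] at this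
      omega
    · exact hne
  obtain ⟨u, v, p, hp, hhits, ⟨Tu, hTuB, huTu, hTuonly⟩, ⟨Tv, hTvB, hvTv, hTvonly⟩⟩ :=
    BrambleAux.exists_good_path hB hBne
  have hXp : HitsAll B {z | z ∈ p.support} := by
    intro S hS
    obtain ⟨z, hz1, hz2⟩ := hhits S hS
    exact ⟨z, hz1, hz2⟩
  have hsupcard : ({z | z ∈ p.support} : Set V).ncard = p.length + 1 := by
    have h1 : ({z | z ∈ p.support} : Set V) = ↑p.support.toFinset := by
      ext z; simp
    rw [h1, Set.ncard_coe_finset, List.toFinset_card_of_nodup hp.support_nodup,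
      Walk.length_support]
  have hX : h ≤ p.length + 1 := by
    have := hkey _ (Set.toFinite _) hXp
    rwa [hsupcard] at this
  have hplen : 2 ≤ p.length := by omega
  have huv : u ≠ v := by
    rintro rfl
    have h0 : p = Walk.nil := congrArg Subtype.val (SimpleGraph.Path.loop_eq ⟨p, hp⟩)
    rw [h0] at hplen
    simp at hplen
  have hR0 : ∃ R0 : G.Walk u v, ∀ z ∈ R0.support, z ∈ Tu ∨ z ∈ Tv := by
    rcases hB.2 Tu hTuB Tv hTvB with ⟨w, hwTu, hwTv⟩ | ⟨a, haTu, b, hbTv, hab⟩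
    · obtain ⟨q1, hq1⟩ := BrambleAux.exists_walk_in (hB.1 Tu hTuB).2 huTu hwTu
      obtain ⟨q2, hq2⟩ := BrambleAux.exists_walk_in (hB.1 Tv hTvB).2 hwTv hvTv
      refine ⟨q1.append q2, fun z hz => ?_⟩
      rw [Walk.mem_support_append_iff] at hz
      exact hz.imp (hq1 z) (hq2 z)
    · obtain ⟨q1, hq1⟩ := BrambleAux.exists_walk_in (hB.1 Tu hTuB).2 huTu haTu
      obtain ⟨q2, hq2⟩ := BrambleAux.exists_walk_in (hB.1 Tv hTvB).2 hbTv hvTv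
      refine ⟨q1.append (Walk.cons hab q2), fun z hz => ?_⟩
      rw [Walk.mem_support_append_iff] at hz
      rcases hz with hz | hz
      · exact Or.inl (hq1 z hz)
      · rw [Walk.support_cons, List.mem_cons] at hz
        rcases hz with rfl | hz
        · exact Or.inl haTu
        · exact Or.inr (hq2 z hz)
  obtain ⟨R0, hR0sup⟩ := hR0
  obtain ⟨R, hR, hRsup⟩ : ∃ R : G.Walk u v, R.IsPath ∧ ∀ z ∈ R.support, z ∈ Tu ∨ z ∈ Tv :=
    ⟨R0.bypass, R0.bypass_isPath, fun z hz => hR0sup z (R0.support_bypass_subset hz)⟩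
  have hRkey : ∀ z ∈ R.support, z ∈ p.support → z = u ∨ z = v := fun z hz hzp =>
    (hRsup z hz).imp (fun h' => hTuonly z h' hzp) (fun h' => hTvonly z h' hzp)
  cases R with
  | nil => exact absurd rfl huv
  | @cons _ r _ hur R1 =>
    have hR1 : R1.IsPath ∧ u ∉ R1.support := (Walk.cons_isPath_iff _ _).mp hR
    have hqPath : (R1.append p.reverse).IsPath := by
      refine BrambleAux.append_isPath hR1.1 hp.reverse ?_
      intro z hz1 hz2
      rw [Walk.support_reverse, List.mem_reverse] at hz2
      have hz1' : z ∈ (Walk.cons hur R1).support := by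
        rw [Walk.support_cons]; exact List.mem_cons_of_mem _ hz1
      rcases hRkey z hz1' hz2 with rfl | rfl
      · exact absurd hz1 hR1.2
      · rfl
    have hedge : s(u, r) ∉ (R1.append p.reverse).edges := by
      intro hmem
      rw [Walk.edges_append, List.mem_append] at hmem
      rcases hmem with hmem | hmem
      · exact hR1.2 (Walk.fst_mem_support_of_mem_edges R1 hmem)
      · rw [Walk.edges_reverse, List.mem_reverse] at hmem
        have hrp : r ∈ p.support := Walk.snd_mem_support_of_mem_edges p hmem
        have hrR : r ∈ (Walk.cons hur R1).support := by
          rw [Walk.support_cons]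
          exact List.mem_cons_of_mem _ R1.start_mem_support
        rcases hRkey r hrR hrp with rfl | rfl
        · exact hur.ne rfl
        · exact BrambleAux.not_edge_of_isPath p hp hplen hmem
    have hcyc : (Walk.cons hur (R1.append p.reverse)).IsCycle :=
      (Walk.cons_isCycle_iff (R1.append p.reverse) hur).mpr ⟨hqPath, hedge⟩
    have hpsub : ∀ z ∈ p.support, z ∈ (Walk.cons hur (R1.append p.reverse)).support := by
      intro z hz
      rw [Walk.support_cons]
      refine List.mem_cons_of_mem _ ?_
      have hz' : z ∈ p.reverse.support := by
        rw [Walk.support_reverse, List.mem_reverse]; exact hz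
      exact Walk.subset_support_append_right _ _ hz'
    have hn3 : 3 ≤ (Walk.cons hur (R1.append p.reverse)).length := hcyc.three_le_length
    have hsubX : ∀ z ∈ (Walk.cons hur (R1.append p.reverse)).support,
        z ∈ (Walk.cons hur (R1.append p.reverse)).getVert ''
          Set.Iio (Walk.cons hur (R1.append p.reverse)).length := by
      intro z hz
      rw [BrambleAux.support_eq_map, List.mem_map] at hz
      obtain ⟨j, hj, rfl⟩ := hz
      rw [List.mem_range] at hj
      rcases Nat.lt_or_ge j (Walk.cons hur (R1.append p.reverse)).length with hlt | hge
      · exact ⟨j, hlt, rfl⟩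
      · have hj' : j = (Walk.cons hur (R1.append p.reverse)).length := by omega
        subst hj'
        refine ⟨0, Set.mem_Iio.mpr (by omega), ?_⟩
        rw [Walk.getVert_zero]
        exact (Walk.getVert_length _).symm
    have hHX : HitsAll B ((Walk.cons hur (R1.append p.reverse)).getVert ''
        Set.Iio (Walk.cons hur (R1.append p.reverse)).length) := by
      intro S hS
      obtain ⟨z, hz1, hz2⟩ := hhits S hS
      exact ⟨z, hz1, hsubX z (hpsub z hz2)⟩
    have hXcard : ((Walk.cons hur (R1.append p.reverse)).getVert ''
        Set.Iio (Walk.cons hur (R1.append p.reverse)).length).ncard ≤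
        (Walk.cons hur (R1.append p.reverse)).length := by
      refine le_trans (Set.ncard_image_le (Set.finite_Iio _)) ?_
      rw [show (Set.Iio (Walk.cons hur (R1.append p.reverse)).length : Set ℕ) =
        ↑(Finset.range (Walk.cons hur (R1.append p.reverse)).length) by
          rw [Finset.coe_range], Set.ncard_coe_finset, Finset.card_range]
    have hhn : h ≤ (Walk.cons hur (R1.append p.reverse)).length :=
      le_trans (hkey _ ((Set.finite_Iio _).image _) hHX) hXcard
    exact ⟨⟨u, Walk.cons hur (R1.append p.reverse), hcyc, hhn⟩,
      BrambleAux.cycle_to_minor hh _ hcyc hhn⟩
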